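/- Second half of Proposition 4.1 (a calibrated heteroclinic chain forces the reverse Peierls-barrier inequality): Let ℓ : ℝ×ℝ×ℝ → ℝ be continuous and ℤ²-periodic in its first two arguments, h ∈ ℝ, and let v̄ : ℝ² → ℝ be continuous, ℤ²-periodic, and satisfy the backward Lax–Oleinik variational property. Let q ∈ ℕ, b ∈ ℤ with |b| < q, y, τ, z ∈ ℝ, k ≥ 1, and x₁, …, x_k ∈ ℝ. Suppose there exist curves γ₀ : (−∞,τ] → ℝ and γ₁, …, γ_k : ℝ → ℝ, all Lipschitz with a common Lipschitz constant, which are calibrated for v̄ (i.e., for each j and each compact interval [a₁,a₂] in the domain of γ_j, v̄(γ_j(a₂),a₂) = ∫_{a₁}^{a₂} ℓ(γ_j(s),s,γ_j'(s)) ds + h·(a₂−a₁) + v̄(γ_j(a₁),a₁)), with γ₀(τ) = y, and with the following asymptotics as ℤ ∋ a → ∓∞, where d_𝕋(u,w) := min_{j∈ℤ} |u − w − j|: d_𝕋(γ₀(aq), x₁) → 0 as a → −∞; for j = 1, …, k−1: d_𝕋(γ_j(aq), x_{j+1}) → 0 as a → −∞ and d_𝕋(γ_j(aq), x_j) → 0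 as a → +∞; d_𝕋(γ_k(aq+b), z) → 0 as a → −∞ and d_𝕋(γ_k(aq), x_k) → 0 as a → +∞. Then h_p(z,0;y,τ) ≤ v̄(y,τ) − v̄(z,0). -/

import Mathlib

open MeasureTheory intervalIntegral

/-- The distance on the circle ℝ/ℤ: `d_𝕋(u,w) = min_{j ∈ ℤ} |u − w − j|`. -/
noncomputable def torusDist (u w : ℝ) : ℝ := |u - w - (round (u - w) : ℝ)|


open MeasureTheory intervalIntegral Filter



lemma st12_intper {f : ℝ → ℝ} (hf : ∀ x : ℝ, f (x + 1) = f x) (m : ℤ) (x : ℝ) :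
    f (x + m) = f x := by
  induction m using Int.induction_on with
  | zero => simp
  | succ n ih =>
      have : x + ((n : ℤ) + 1 : ℤ) = (x + (n : ℤ)) + 1 := by push_cast; ring
      rw [this, hf, ih]
  | pred n ih =>
      have h1 : (x + (-(n : ℤ) - 1 : ℤ)) + 1 = x + (-(n : ℤ) : ℤ) := by push_cast; ring
      have h2 := hf (x + (-(n : ℤ) - 1 : ℤ))
      rw [h1] at h2
      rw [← h2, ih]

section ell

variable {ℓ : ℝ → ℝ → ℝ → ℝ}
variable (hℓper : ∀ x t ξ : ℝ, ℓ (x + 1) t ξ = ℓ x t ξ ∧ ℓ x (t + 1) ξ = ℓ x t ξ)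

include hℓper in
lemma st12_ell_red (x t ξ : ℝ) (m n : ℤ) : ℓ (x + m) (t + n) ξ = ℓ x t ξ := by
  have h1 : ℓ (x + m) (t + n) ξ = ℓ x (t + n) ξ :=
    st12_intper (f := fun u => ℓ u (t + n) ξ) (fun u => (hℓper u (t + n) ξ).1) m x
  have h2 : ℓ x (t + n) ξ = ℓ x t ξ :=
    st12_intper (f := fun u => ℓ x u ξ) (fun u => (hℓper x u ξ).2) n t
  rw [h1, h2]

include hℓper in
lemma st12_ell_fract (x t ξ : ℝ) : ℓ x t ξ = ℓ (Int.fract x) (Int.fract t) ξ := by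
  have : ℓ (Int.fract x + (⌊x⌋ : ℤ)) (Int.fract t + (⌊t⌋ : ℤ)) ξ
      = ℓ (Int.fract x) (Int.fract t) ξ := st12_ell_red hℓper _ _ _ _ _
  rw [← this]
  congr 1 <;> [skip; congr 1] <;> · rw [Int.fract]; ring

include hℓper in
lemma st12_ell_bound (hℓ : Continuous fun p : ℝ × ℝ × ℝ => ℓ p.1 p.2.1 p.2.2)
    (B : ℝ) : ∃ M : ℝ, ∀ x t ξ : ℝ, |ξ| ≤ B → |ℓ x t ξ| ≤ M := by
  set K : Set (ℝ × ℝ × ℝ) :=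
    Set.Icc (-1) 2 ×ˢ Set.Icc (-1) 2 ×ˢ Set.Icc (-(B+1)) (B+1) with hK
  have hKc : IsCompact K := (isCompact_Icc).prod ((isCompact_Icc).prod isCompact_Icc)
  obtain ⟨M, hM⟩ := hKc.exists_bound_of_continuousOn hℓ.continuousOn
  refine ⟨M, fun x t ξ hξ => ?_⟩
  rw [st12_ell_fract hℓper x t ξ]
  have hmem : ((Int.fract x, Int.fract t, ξ) : ℝ × ℝ × ℝ) ∈ K := by
    refine ⟨⟨?_, ?_⟩, ⟨?_, ?_⟩, ?_, ?_⟩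
    · linarith [Int.fract_nonneg x]
    · linarith [le_of_lt (Int.fract_lt_one x)]
    · linarith [Int.fract_nonneg t]
    · linarith [le_of_lt (Int.fract_lt_one t)]
    · cases' abs_le.mp hξ with h1 h2; linarith
    · cases' abs_le.mp hξ with h1 h2; linarith
  simpa [Real.norm_eq_abs] using hM _ hmem

include hℓper in
lemma st12_ell_uc (hℓ : Continuous fun p : ℝ × ℝ × ℝ => ℓ p.1 p.2.1 p.2.2)
    {B η : ℝ} (hB : 0 ≤ B) (hη : 0 < η) :
    ∃ δ : ℝ, 0 < δ ∧ δ ≤ 1 ∧ ∀ x t ξ u Δ : ℝ, |ξ| ≤ B → |u| ≤ δ → |Δ| ≤ δ →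
      |ℓ (x + u) t (ξ + Δ) - ℓ x t ξ| ≤ η := by
  set K : Set (ℝ × ℝ × ℝ) :=
    Set.Icc (-1) 2 ×ˢ Set.Icc (-1) 2 ×ˢ Set.Icc (-(B+1)) (B+1) with hK
  have hKc : IsCompact K := (isCompact_Icc).prod ((isCompact_Icc).prod isCompact_Icc)
  have huc : UniformContinuousOn (fun p : ℝ × ℝ × ℝ => ℓ p.1 p.2.1 p.2.2) K :=
    hKc.uniformContinuousOn_of_continuous hℓ.continuousOn
  rw [Metric.uniformContinuousOn_iff] at huc
  obtain ⟨δ', hδ'pos, hδ'⟩ := huc η hη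
  refine ⟨min 1 (δ' / 2), by positivity, min_le_left _ _, fun x t ξ u Δ hξ hu hΔ => ?_⟩
  have hred1 : ℓ (x + u) t (ξ + Δ) = ℓ (Int.fract x + u) (Int.fract t) (ξ + Δ) := by
    have : ℓ ((Int.fract x + u) + (⌊x⌋ : ℤ)) (Int.fract t + (⌊t⌋ : ℤ)) (ξ + Δ)
        = ℓ (Int.fract x + u) (Int.fract t) (ξ + Δ) := st12_ell_red hℓper _ _ _ _ _
    rw [← this]
    congr 1
    · rw [Int.fract]; ring
    · congr 1; rw [Int.fract]; ring
  have hred2 : ℓ x t ξ = ℓ (Int.fract x) (Int.fract t) ξ := st12_ell_fract hℓper x t ξ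
  rw [hred1, hred2]
  have hu1 : |u| ≤ 1 := le_trans hu (min_le_left _ _)
  have hΔ1 : |Δ| ≤ 1 := le_trans hΔ (min_le_left _ _)
  have hud : |u| ≤ δ' / 2 := le_trans hu (min_le_right _ _)
  have hΔd : |Δ| ≤ δ' / 2 := le_trans hΔ (min_le_right _ _)
  have h1 := Int.fract_nonneg x; have h2 := le_of_lt (Int.fract_lt_one x)
  have h3 := Int.fract_nonneg t; have h4 := le_of_lt (Int.fract_lt_one t)
  have h5 := abs_le.mp hu1; have h6 := abs_le.mp hΔ1; have h7 := abs_le.mp hξ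
  obtain ⟨h5a, h5b⟩ := h5; obtain ⟨h6a, h6b⟩ := h6; obtain ⟨h7a, h7b⟩ := h7
  have hm1 : ((Int.fract x + u, Int.fract t, ξ + Δ) : ℝ × ℝ × ℝ) ∈ K := by
    simp only [K, Set.mem_prod, Set.mem_Icc]
    refine ⟨⟨?_, ?_⟩, ⟨?_, ?_⟩, ?_, ?_⟩ <;> linarith
  have hm2 : ((Int.fract x, Int.fract t, ξ) : ℝ × ℝ × ℝ) ∈ K := by
    simp only [K, Set.mem_prod, Set.mem_Icc]
    refine ⟨⟨?_, ?_⟩, ⟨?_, ?_⟩, ?_, ?_⟩ <;> linarith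
  have hdist : dist ((Int.fract x + u, Int.fract t, ξ + Δ) : ℝ × ℝ × ℝ)
      ((Int.fract x, Int.fract t, ξ) : ℝ × ℝ × ℝ) < δ' := by
    rw [Prod.dist_eq, Prod.dist_eq]
    simp only [Real.dist_eq]
    have e1 : |Int.fract x + u - Int.fract x| = |u| := by rw [show Int.fract x + u - Int.fract x = u by ring]
    have e2 : |Int.fract t - Int.fract t| = 0 := by simp
    have e3 : |ξ + Δ - ξ| = |Δ| := by rw [show ξ + Δ - ξ = Δ by ring]
    rw [e1, e2, e3]
    apply max_lt (by linarith)
    apply max_lt (by linarith) (by linarith)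
  have := hδ' _ hm1 _ hm2 hdist
  rw [Real.dist_eq] at this
  exact le_of_lt this

end ell

section vbar

variable {vbar : ℝ → ℝ → ℝ}
variable (hper : ∀ x t : ℝ, vbar (x + 1) t = vbar x t ∧ vbar x (t + 1) = vbar x t)

include hper in
lemma st12_vbar_red (x t : ℝ) (m n : ℤ) : vbar (x + m) (t + n) = vbar x t := by
  have h1 : vbar (x + m) (t + n) = vbar x (t + n) :=
    st12_intper (f := fun u => vbar u (t + n)) (fun u => (hper u (t + n)).1) m x
  have h2 : vbar x (t + n) = vbar x t :=
    st12_intper (f := fun u => vbar x u) (fun u => (hper x u).2) n t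
  rw [h1, h2]

include hper in
lemma st12_vbar_fract (x t : ℝ) : vbar x t = vbar (Int.fract x) (Int.fract t) := by
  have : vbar (Int.fract x + (⌊x⌋ : ℤ)) (Int.fract t + (⌊t⌋ : ℤ))
      = vbar (Int.fract x) (Int.fract t) := st12_vbar_red hper _ _ _ _
  rw [← this]
  congr 1 <;> · rw [Int.fract]; ring

include hper in
lemma st12_vbar_bound (hcont : Continuous fun p : ℝ × ℝ => vbar p.1 p.2) :
    ∃ M : ℝ, ∀ x t : ℝ, |vbar x t| ≤ M := by
  set K : Set (ℝ × ℝ) := Set.Icc (-1) 2 ×ˢ Set.Icc (-1) 2 with hK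
  have hKc : IsCompact K := isCompact_Icc.prod isCompact_Icc
  obtain ⟨M, hM⟩ := hKc.exists_bound_of_continuousOn hcont.continuousOn
  refine ⟨M, fun x t => ?_⟩
  rw [st12_vbar_fract hper x t]
  have hmem : ((Int.fract x, Int.fract t) : ℝ × ℝ) ∈ K := by
    refine ⟨⟨?_, ?_⟩, ?_, ?_⟩
    · linarith [Int.fract_nonneg x]
    · linarith [le_of_lt (Int.fract_lt_one x)]
    · linarith [Int.fract_nonneg t]
    · linarith [le_of_lt (Int.fract_lt_one t)]
  simpa [Real.norm_eq_abs] using hM _ hmem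

include hper in
lemma st12_vbar_uc (hcont : Continuous fun p : ℝ × ℝ => vbar p.1 p.2) {η : ℝ} (hη : 0 < η) :
    ∃ δ : ℝ, 0 < δ ∧ δ ≤ 1 ∧ ∀ (w p : ℝ) (m t : ℤ), |p - (w + m)| ≤ δ →
      |vbar p t - vbar w 0| ≤ η := by
  set K : Set (ℝ × ℝ) := Set.Icc (-1) 2 ×ˢ Set.Icc (-1) 2 with hK
  have hKc : IsCompact K := isCompact_Icc.prod isCompact_Icc
  have huc : UniformContinuousOn (fun p : ℝ × ℝ => vbar p.1 p.2) K :=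
    hKc.uniformContinuousOn_of_continuous hcont.continuousOn
  rw [Metric.uniformContinuousOn_iff] at huc
  obtain ⟨δ', hδ'pos, hδ'⟩ := huc η hη
  refine ⟨min 1 (δ' / 2), by positivity, min_le_left _ _, fun w p m t hp => ?_⟩
  have hp1 : |p - (w + m)| ≤ 1 := le_trans hp (min_le_left _ _)
  have hpd : |p - (w + m)| ≤ δ' / 2 := le_trans hp (min_le_right _ _)
  -- reduce vbar p t to vbar (p - m - ⌊w⌋) 0
  have hred1 : vbar p t = vbar (p - m - (⌊w⌋ : ℤ)) 0 := by
    have : vbar ((p - m - (⌊w⌋ : ℤ)) + ((m + ⌊w⌋ : ℤ) : ℤ)) ((0 : ℝ) + (t : ℤ))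
        = vbar (p - m - (⌊w⌋ : ℤ)) 0 := st12_vbar_red hper _ _ _ _
    rw [← this]
    congr 1
    · push_cast; ring
    · push_cast; ring
  have hred2 : vbar w 0 = vbar (Int.fract w) 0 := by
    have : vbar (Int.fract w + (⌊w⌋ : ℤ)) ((0:ℝ) + (0 : ℤ)) = vbar (Int.fract w) 0 :=
      st12_vbar_red hper _ _ _ _
    rw [← this]
    congr 1
    · rw [Int.fract]; ring
    · push_cast; ring
  rw [hred1, hred2]
  have hkey : p - m - (⌊w⌋ : ℤ) - Int.fract w = p - (w + m) := by rw [Int.fract]; ring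
  have h1 := Int.fract_nonneg w; have h2 := le_of_lt (Int.fract_lt_one w)
  have h5 := abs_le.mp hp1
  obtain ⟨h5a, h5b⟩ := h5
  have hfr : p - m - (⌊w⌋ : ℤ) = Int.fract w + (p - (w + m)) := by rw [Int.fract]; ring
  have hm1 : ((p - m - (⌊w⌋ : ℤ), 0) : ℝ × ℝ) ∈ K := by
    simp only [K, Set.mem_prod, Set.mem_Icc]
    rw [hfr]
    refine ⟨⟨?_, ?_⟩, ?_, ?_⟩ <;> norm_num <;> linarith
  have hm2 : ((Int.fract w, 0) : ℝ × ℝ) ∈ K := by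
    simp only [K, Set.mem_prod, Set.mem_Icc]
    refine ⟨⟨?_, ?_⟩, ?_, ?_⟩ <;> norm_num <;> linarith
  have hdist : dist ((p - m - (⌊w⌋ : ℤ), 0) : ℝ × ℝ) ((Int.fract w, 0) : ℝ × ℝ) < δ' := by
    rw [Prod.dist_eq]
    simp only [Real.dist_eq]
    rw [hkey]
    apply max_lt (by linarith)
    norm_num; linarith
  have := hδ' _ hm1 _ hm2 hdist
  rw [Real.dist_eq] at this
  exact le_of_lt this

end vbar

lemma st12_deriv_bound {f : ℝ → ℝ} {L : NNReal} (hf : LipschitzWith L f) (s : ℝ) :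
    |deriv f s| ≤ L := by
  by_cases hd : DifferentiableAt ℝ f s
  · have h1 : HasDerivAt f (deriv f s) s := hd.hasDerivAt
    rw [hasDerivAt_iff_tendsto_slope] at h1
    have h2 : ∀ t : ℝ, t ≠ s → |slope f s t| ≤ L := by
      intro t ht
      rw [slope_def_field]
      rw [div_eq_mul_inv, abs_mul, abs_inv]
      rw [← div_eq_mul_inv]
      have hts : (0:ℝ) < |t - s| := abs_pos.mpr (sub_ne_zero.mpr ht)
      rw [div_le_iff₀ hts]
      have := hf.dist_le_mul t s
      simpa [Real.dist_eq, abs_sub_comm] using this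
    have h3 : ∀ᶠ t in nhdsWithin s {s}ᶜ, |slope f s t| ≤ L := by
      filter_upwards [self_mem_nhdsWithin] with t ht
      exact h2 t ht
    have h4 : Tendsto (fun t => |slope f s t|) (nhdsWithin s {s}ᶜ) (nhds |deriv f s|) :=
      (continuous_abs.tendsto _).comp h1
    exact le_of_tendsto h4 h3
  · rw [deriv_zero_of_not_differentiableAt hd]
    simp

/-- slope sequence converges to the derivative. -/
lemma st12_slope_seq {f : ℝ → ℝ} {c d : ℝ} (hh : HasDerivAt f d c) :
    Tendsto (fun n : ℕ => ((n : ℝ) + 1) * (f c - f (c - 1 / ((n : ℝ) + 1)))) Filter.atTop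
      (nhds d) := by
  rw [hasDerivAt_iff_tendsto_slope] at hh
  have key : ∀ n : ℕ, ((n : ℝ) + 1) * (f c - f (c - 1 / ((n : ℝ) + 1)))
      = slope f c (c - 1 / ((n : ℝ) + 1)) := by
    intro n
    have hn : (0 : ℝ) < (n : ℝ) + 1 := by positivity
    rw [slope_def_field]
    field_simp
    ring
  simp only [key]
  apply hh.comp
  apply tendsto_nhdsWithin_of_tendsto_nhds_of_eventually_within
  · have : Tendsto (fun n : ℕ => 1 / ((n : ℝ) + 1)) Filter.atTop (nhds 0) :=
      tendsto_one_div_add_atTop_nhds_zero_nat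
    have := tendsto_const_nhds.sub this (f := fun _ : ℕ => c)
    simpa using this
  · filter_upwards with n
    have hn : (0 : ℝ) < 1 / ((n : ℝ) + 1) := by positivity
    simp only [Set.mem_compl_iff, Set.mem_singleton_iff]
    intro hcon
    nlinarith [hcon]

lemma st12_prim_tendsto {f : ℝ → ℝ} (hf : Continuous f) (c : ℝ) :
    Tendsto (fun n : ℕ => ((n : ℝ) + 1) * ∫ t in (c - 1 / ((n : ℝ) + 1))..c, f t)
      Filter.atTop (nhds (f c)) := by
  have hF : HasDerivAt (fun x => ∫ t in (c - 1)..x, f t) (f c) c :=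
    integral_hasDerivAt_right (hf.intervalIntegrable _ _)
      (hf.stronglyMeasurableAtFilter _ _) hf.continuousAt
  have h1 := st12_slope_seq hF
  have h2 : ∀ n : ℕ, (∫ t in (c - 1)..c, f t) - (∫ t in (c - 1)..(c - 1 / ((n : ℝ) + 1)), f t)
      = ∫ t in (c - 1 / ((n : ℝ) + 1))..c, f t := by
    intro n
    have := integral_add_adjacent_intervals (a := c - 1) (b := c - 1 / ((n : ℝ) + 1)) (c := c)
      (f := f) (μ := volume) (hf.intervalIntegrable _ _) (hf.intervalIntegrable _ _)
    linarith [this]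
  simp only [h2] at h1
  exact h1

lemma st12_ftc {f : ℝ → ℝ} {L : NNReal} (hf : LipschitzWith L f) (a b : ℝ) :
    (∫ s in a..b, deriv f s) = f b - f a := by
  have hcont : Continuous f := hf.continuous
  set g : ℕ → ℝ → ℝ := fun n s => ((n : ℝ) + 1) * (f s - f (s - 1 / ((n : ℝ) + 1))) with hg
  have hgb : ∀ n s, |g n s| ≤ L := by
    intro n s
    have hn : (0 : ℝ) < (n : ℝ) + 1 := by positivity
    have hd := hf.dist_le_mul s (s - 1 / ((n : ℝ) + 1))
    rw [Real.dist_eq, Real.dist_eq] at hd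
    have hss : |s - (s - 1 / ((n : ℝ) + 1))| = 1 / ((n : ℝ) + 1) := by
      rw [show s - (s - 1 / ((n : ℝ) + 1)) = 1 / ((n : ℝ) + 1) by ring]
      exact abs_of_pos (by positivity)
    rw [hss] at hd
    have : |g n s| = ((n : ℝ) + 1) * |f s - f (s - 1 / ((n : ℝ) + 1))| := by
      rw [hg]; rw [abs_mul, abs_of_pos hn]
    rw [this]
    calc ((n : ℝ) + 1) * |f s - f (s - 1 / ((n : ℝ) + 1))|
        ≤ ((n : ℝ) + 1) * ((L : ℝ) * (1 / ((n : ℝ) + 1))) := by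
          apply mul_le_mul_of_nonneg_left hd (le_of_lt hn)
      _ = L := by field_simp
  -- dominated convergence
  have hdct : Tendsto (fun n => ∫ s in a..b, g n s) Filter.atTop
      (nhds (∫ s in a..b, deriv f s)) := by
    apply intervalIntegral.tendsto_integral_filter_of_dominated_convergence
      (bound := fun _ => (L : ℝ))
    · filter_upwards with n
      exact (continuous_const.mul (hcont.sub (hcont.comp (by continuity)))).aestronglyMeasurable
    · filter_upwards with n
      filter_upwards with s _
      simpa [Real.norm_eq_abs] using hgb n s
    · exact intervalIntegrable_const
    · have hae := hf.ae_differentiableAt (μ := volume)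
      filter_upwards [hae] with s hs _
      exact st12_slope_seq hs.hasDerivAt
  -- compute the integrals of g n
  have hcomp : ∀ n : ℕ, (∫ s in a..b, g n s)
      = ((n : ℝ) + 1) * (∫ t in (b - 1 / ((n : ℝ) + 1))..b, f t)
        - ((n : ℝ) + 1) * (∫ t in (a - 1 / ((n : ℝ) + 1))..a, f t) := by
    intro n
    set d : ℝ := 1 / ((n : ℝ) + 1) with hd
    have h1 : (∫ s in a..b, g n s)
        = ((n : ℝ) + 1) * ((∫ s in a..b, f s) - ∫ s in a..b, f (s - d)) := by
      rw [hg]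
      simp only []
      rw [intervalIntegral.integral_const_mul]
      congr 1
      exact intervalIntegral.integral_sub (hcont.intervalIntegrable _ _)
        ((hcont.comp (continuous_id.sub continuous_const)).intervalIntegrable _ _)
    have h2 : (∫ s in a..b, f (s - d)) = ∫ s in (a - d)..(b - d), f s :=
      intervalIntegral.integral_comp_sub_right f d
    have h3 : (∫ s in (a-d)..(b-d), f s) + (∫ s in (b-d)..b, f s) = ∫ s in (a-d)..b, f s :=
      integral_add_adjacent_intervals (hcont.intervalIntegrable _ _)
        (hcont.intervalIntegrable _ _)
    have h4 : (∫ s in (a-d)..a, f s) + (∫ s in a..b, f s) = ∫ s in (a-d)..b, f s :=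
      integral_add_adjacent_intervals (hcont.intervalIntegrable _ _)
        (hcont.intervalIntegrable _ _)
    rw [h1, h2]
    have : (∫ s in a..b, f s) - (∫ s in (a-d)..(b-d), f s)
        = (∫ s in (b-d)..b, f s) - (∫ s in (a-d)..a, f s) := by linarith
    rw [this]
    ring
  have hlim2 : Tendsto (fun n => ∫ s in a..b, g n s) Filter.atTop (nhds (f b - f a)) := by
    have hb' := st12_prim_tendsto hcont b
    have ha' := st12_prim_tendsto hcont a
    have := hb'.sub ha'
    apply Tendsto.congr (fun n => (hcomp n).symm) this
  exact tendsto_nhds_unique hdct hlim2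



noncomputable section

variable (ℓ : ℝ → ℝ → ℝ → ℝ) (h : ℝ)

def st12_Reach (t₀ t₁ p₀ p₁ C : ℝ) : Prop :=
  ∃ ρ : ℝ → ℝ,
    IntervalIntegrable ρ volume t₀ t₁ ∧
    p₀ + (∫ s in t₀..t₁, ρ s) = p₁ ∧
    IntervalIntegrable (fun s => ℓ (p₀ + ∫ u in t₀..s, ρ u) s (ρ s) + h) volume t₀ t₁ ∧
    (∫ s in t₀..t₁, (ℓ (p₀ + ∫ u in t₀..s, ρ u) s (ρ s) + h)) ≤ C

variable {ℓ h}

lemma st12_Reach.mono {t₀ t₁ p₀ p₁ C C' : ℝ} (hr : st12_Reach ℓ h t₀ t₁ p₀ p₁ C)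
    (hC : C ≤ C') : st12_Reach ℓ h t₀ t₁ p₀ p₁ C' := by
  obtain ⟨ρ, h1, h2, h3, h4⟩ := hr
  exact ⟨ρ, h1, h2, h3, le_trans h4 hC⟩

lemma st12_ae_ne (t : ℝ) : ∀ᵐ u : ℝ, u ≠ t := by
  rw [MeasureTheory.ae_iff]
  have : {u : ℝ | ¬u ≠ t} = {t} := by ext u; simp
  rw [this]
  exact Real.volume_singleton

/-- concatenation of curves -/
lemma st12_Reach.trans {t₀ t₁ t₂ p₀ p₁ p₂ C₁ C₂ : ℝ} (h01 : t₀ ≤ t₁) (h12 : t₁ ≤ t₂)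
    (hr1 : st12_Reach ℓ h t₀ t₁ p₀ p₁ C₁) (hr2 : st12_Reach ℓ h t₁ t₂ p₁ p₂ C₂) :
    st12_Reach ℓ h t₀ t₂ p₀ p₂ (C₁ + C₂) := by
  obtain ⟨ρ₁, h1i, h1p, h1ci, h1c⟩ := hr1
  obtain ⟨ρ₂, h2i, h2p, h2ci, h2c⟩ := hr2
  set ρ : ℝ → ℝ := fun s => if s < t₁ then ρ₁ s else ρ₂ s with hρ
  have fB : ∀ s, s < t₁ → ρ s = ρ₁ s := fun s hs => if_pos hs
  have fA : ∀ s, t₁ ≤ s → ρ s = ρ₂ s := fun s hs => if_neg (not_lt.mpr hs)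
  have ae1 : ∀ c d : ℝ, c ≤ t₁ → d ≤ t₁ →
      ρ₁ =ᵐ[volume.restrict (Set.uIoc c d)] ρ := by
    intro c d hc hd
    refine (ae_restrict_iff' measurableSet_uIoc).mpr ?_
    filter_upwards [st12_ae_ne t₁] with u hu hmem
    have h1 : u ≤ max c d := hmem.2
    have h2 : u < t₁ := lt_of_le_of_ne (le_trans h1 (max_le hc hd)) hu
    exact (fB u h2).symm
  have ae2 : ∀ c d : ℝ, t₁ ≤ c → t₁ ≤ d →
      ρ₂ =ᵐ[volume.restrict (Set.uIoc c d)] ρ := by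
    intro c d hc hd
    refine (ae_restrict_iff' measurableSet_uIoc).mpr ?_
    filter_upwards with u hmem
    have h1 : min c d < u := hmem.1
    exact (fA u (le_of_lt (lt_of_le_of_lt (le_min hc hd) h1))).symm
  have i1 : IntervalIntegrable ρ volume t₀ t₁ := h1i.congr_ae (ae1 t₀ t₁ h01 le_rfl)
  have i2s : ∀ s, t₁ ≤ s → s ≤ t₂ → IntervalIntegrable ρ volume t₁ s := by
    intro s hs1 hs2
    refine (h2i.mono_set ?_).congr_ae (ae2 t₁ s le_rfl hs1)
    rw [Set.uIcc_of_le hs1, Set.uIcc_of_le h12]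
    exact Set.Icc_subset_Icc le_rfl hs2
  have iρ : IntervalIntegrable ρ volume t₀ t₂ := i1.trans (i2s t₂ h12 le_rfl)
  have pos1 : ∀ s, s ≤ t₁ → (∫ u in t₀..s, ρ u) = ∫ u in t₀..s, ρ₁ u := by
    intro s hs
    exact (intervalIntegral.integral_congr_ae
      ((ae_restrict_iff' measurableSet_uIoc).mp (ae1 t₀ s h01 hs))).symm
  have pos2 : ∀ s, t₁ ≤ s → s ≤ t₂ →
      p₀ + (∫ u in t₀..s, ρ u) = p₁ + ∫ u in t₁..s, ρ₂ u := by
    intro s hs1 hs2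
    have hsplit : (∫ u in t₀..t₁, ρ u) + (∫ u in t₁..s, ρ u) = ∫ u in t₀..s, ρ u :=
      integral_add_adjacent_intervals i1 (i2s s hs1 hs2)
    have e1 : (∫ u in t₀..t₁, ρ u) = ∫ u in t₀..t₁, ρ₁ u := pos1 t₁ le_rfl
    have e2 : (∫ u in t₁..s, ρ u) = ∫ u in t₁..s, ρ₂ u :=
      (intervalIntegral.integral_congr_ae
        ((ae_restrict_iff' measurableSet_uIoc).mp (ae2 t₁ s le_rfl hs1))).symm
    rw [← hsplit, e1, e2]
    rw [← h1p]
    ring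
  -- the new cost integrand
  have eF1 : ∀ᵐ s ∂volume, s ∈ Set.uIoc t₀ t₁ →
      ℓ (p₀ + ∫ u in t₀..s, ρ₁ u) s (ρ₁ s) + h
        = ℓ (p₀ + ∫ u in t₀..s, ρ u) s (ρ s) + h := by
    filter_upwards [st12_ae_ne t₁] with s hne hmem
    have hs1 : s ≤ t₁ := le_trans hmem.2 (max_le h01 le_rfl)
    have hs2 : s < t₁ := lt_of_le_of_ne hs1 hne
    rw [pos1 s hs1, fB s hs2]
  have eF2 : ∀ s ∈ Set.uIoc t₁ t₂,
      ℓ (p₁ + ∫ u in t₁..s, ρ₂ u) s (ρ₂ s) + h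
        = ℓ (p₀ + ∫ u in t₀..s, ρ u) s (ρ s) + h := by
    intro s hmem
    have hs1 : t₁ < s := lt_of_le_of_lt (le_min le_rfl h12) hmem.1
    have hs2 : s ≤ t₂ := le_trans hmem.2 (max_le h12 le_rfl)
    rw [← pos2 s (le_of_lt hs1) hs2, fA s (le_of_lt hs1)]
  have ciF1 : IntervalIntegrable
      (fun s => ℓ (p₀ + ∫ u in t₀..s, ρ u) s (ρ s) + h) volume t₀ t₁ :=
    h1ci.congr_ae ((ae_restrict_iff' measurableSet_uIoc).mpr eF1)
  have ciF2 : IntervalIntegrable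
      (fun s => ℓ (p₀ + ∫ u in t₀..s, ρ u) s (ρ s) + h) volume t₁ t₂ :=
    h2ci.congr_ae ((ae_restrict_iff' measurableSet_uIoc).mpr
      (Filter.Eventually.of_forall eF2))
  refine ⟨ρ, iρ, ?_, ciF1.trans ciF2, ?_⟩
  · rw [pos2 t₂ h12 le_rfl, h2p]
  · have hsplit : (∫ s in t₀..t₁, (ℓ (p₀ + ∫ u in t₀..s, ρ u) s (ρ s) + h))
        + (∫ s in t₁..t₂, (ℓ (p₀ + ∫ u in t₀..s, ρ u) s (ρ s) + h))
        = ∫ s in t₀..t₂, (ℓ (p₀ + ∫ u in t₀..s, ρ u) s (ρ s) + h) :=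
      integral_add_adjacent_intervals ciF1 ciF2
    have e1 : (∫ s in t₀..t₁, (ℓ (p₀ + ∫ u in t₀..s, ρ u) s (ρ s) + h))
        = ∫ s in t₀..t₁, (ℓ (p₀ + ∫ u in t₀..s, ρ₁ u) s (ρ₁ s) + h) :=
      (intervalIntegral.integral_congr_ae eF1).symm
    have e2 : (∫ s in t₁..t₂, (ℓ (p₀ + ∫ u in t₀..s, ρ u) s (ρ s) + h))
        = ∫ s in t₁..t₂, (ℓ (p₁ + ∫ u in t₁..s, ρ₂ u) s (ρ₂ s) + h) :=
      (intervalIntegral.integral_congr_ae (Filter.Eventually.of_forall eF2)).symm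
    rw [← hsplit, e1, e2]
    exact add_le_add h1c h2c

end
section chunk5

open MeasureTheory intervalIntegral Filter

variable {ℓ : ℝ → ℝ → ℝ → ℝ} {h : ℝ}

/-- intervalIntegrable from a.e.-strong-measurability and a global bound -/
lemma st12_ii {φ : ℝ → ℝ} {a b M : ℝ}
    (hm : AEStronglyMeasurable φ (volume.restrict (Set.uIoc a b)))
    (hb : ∀ s, |φ s| ≤ M) : IntervalIntegrable φ volume a b := by
  rw [intervalIntegrable_iff]
  refine Integrable.mono' (g := fun _ => M) ?_ hm ?_
  · have : IntegrableOn (fun _ => M) (Set.uIoc a b) volume :=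
      integrableOn_const measure_Ioc_lt_top.ne
    exact this
  · filter_upwards with s using by simpa [Real.norm_eq_abs] using hb s

/-- time-space integer translation of curves -/
lemma st12_Reach.shift
    (hℓper : ∀ x t ξ : ℝ, ℓ (x + 1) t ξ = ℓ x t ξ ∧ ℓ x (t + 1) ξ = ℓ x t ξ)
    {t₀ t₁ p₀ p₁ C : ℝ} (m n : ℤ) (hr : st12_Reach ℓ h t₀ t₁ p₀ p₁ C) :
    st12_Reach ℓ h (t₀ + n) (t₁ + n) (p₀ + m) (p₁ + m) C := by
  obtain ⟨ρ, hi, hp, hci, hc⟩ := hr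
  refine ⟨fun s => ρ (s - (n : ℝ)), ?_, ?_, ?_, ?_⟩
  · exact hi.comp_sub_right (n : ℝ)
  · have e := intervalIntegral.integral_comp_sub_right (a := t₀ + (n:ℝ)) (b := t₁ + (n:ℝ))
      ρ (n : ℝ)
    simp only [add_sub_cancel_right] at e
    rw [e, show p₀ + (m:ℝ) + (∫ x in t₀..t₁, ρ x) = (p₀ + ∫ x in t₀..t₁, ρ x) + (m:ℝ) by ring,
      hp]
  · have key : ∀ s : ℝ, ℓ (p₀ + (m:ℝ) + ∫ u in (t₀ + (n:ℝ))..s, ρ (u - (n:ℝ))) s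
        (ρ (s - (n:ℝ))) + h
        = (fun u => ℓ (p₀ + ∫ v in t₀..u, ρ v) u (ρ u) + h) (s - (n:ℝ)) := by
      intro s
      have e := intervalIntegral.integral_comp_sub_right (a := t₀ + (n:ℝ)) (b := s) ρ (n : ℝ)
      simp only [add_sub_cancel_right] at e
      rw [e]
      simp only []
      have := st12_ell_red hℓper (p₀ + ∫ v in t₀..(s - (n:ℝ)), ρ v) (s - (n:ℝ))
        (ρ (s - (n:ℝ))) m n
      rw [← this]
      have harg : s - (n:ℝ) + (n:ℝ) = s := by ring
      rw [harg, show p₀ + (∫ v in t₀..(s - (n:ℝ)), ρ v) + (m:ℝ)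
        = p₀ + (m:ℝ) + ∫ v in t₀..(s - (n:ℝ)), ρ v by ring]
    have : (fun s => ℓ (p₀ + (m:ℝ) + ∫ u in (t₀ + (n:ℝ))..s, ρ (u - (n:ℝ))) s
        (ρ (s - (n:ℝ))) + h)
        = fun s => (fun u => ℓ (p₀ + ∫ v in t₀..u, ρ v) u (ρ u) + h) (s - (n:ℝ)) :=
      funext key
    rw [this]
    exact hci.comp_sub_right (n : ℝ)
  · have key : ∀ s : ℝ, ℓ (p₀ + (m:ℝ) + ∫ u in (t₀ + (n:ℝ))..s, ρ (u - (n:ℝ))) s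
        (ρ (s - (n:ℝ))) + h
        = (fun u => ℓ (p₀ + ∫ v in t₀..u, ρ v) u (ρ u) + h) (s - (n:ℝ)) := by
      intro s
      have e := intervalIntegral.integral_comp_sub_right (a := t₀ + (n:ℝ)) (b := s) ρ (n : ℝ)
      simp only [add_sub_cancel_right] at e
      rw [e]
      simp only []
      have := st12_ell_red hℓper (p₀ + ∫ v in t₀..(s - (n:ℝ)), ρ v) (s - (n:ℝ))
        (ρ (s - (n:ℝ))) m n
      rw [← this]
      have harg : s - (n:ℝ) + (n:ℝ) = s := by ring
      rw [harg, show p₀ + (∫ v in t₀..(s - (n:ℝ)), ρ v) + (m:ℝ)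
        = p₀ + (m:ℝ) + ∫ v in t₀..(s - (n:ℝ)), ρ v by ring]
    calc (∫ s in (t₀ + (n:ℝ))..(t₁ + (n:ℝ)),
          (ℓ (p₀ + (m:ℝ) + ∫ u in (t₀ + (n:ℝ))..s, ρ (u - (n:ℝ))) s (ρ (s - (n:ℝ))) + h))
        = ∫ s in (t₀ + (n:ℝ))..(t₁ + (n:ℝ)),
            (fun u => ℓ (p₀ + ∫ v in t₀..u, ρ v) u (ρ u) + h) (s - (n:ℝ)) := by
          apply intervalIntegral.integral_congr
          intro s _
          exact key s
      _ = ∫ u in t₀..t₁, (ℓ (p₀ + ∫ v in t₀..u, ρ v) u (ρ u) + h) := by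
          have e := intervalIntegral.integral_comp_sub_right (a := t₀ + (n:ℝ))
            (b := t₁ + (n:ℝ)) (fun u => ℓ (p₀ + ∫ v in t₀..u, ρ v) u (ρ u) + h) (n : ℝ)
          simp only [add_sub_cancel_right] at e
          exact e
      _ ≤ C := hc

/-- a calibrated Lipschitz curve gives a `Reach` certificate with cost equal to its action -/
lemma st12_reach_cal
    (hℓ : Continuous fun p : ℝ × ℝ × ℝ => ℓ p.1 p.2.1 p.2.2)
    (hℓper : ∀ x t ξ : ℝ, ℓ (x + 1) t ξ = ℓ x t ξ ∧ ℓ x (t + 1) ξ = ℓ x t ξ)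
    {f : ℝ → ℝ} {L : NNReal} (hf : LipschitzWith L f) (a b : ℝ) (hab : a ≤ b) :
    st12_Reach ℓ h a b (f a) (f b)
      ((∫ s in a..b, ℓ (f s) s (deriv f s)) + h * (b - a)) := by
  obtain ⟨M, hM⟩ := st12_ell_bound hℓper hℓ (L : ℝ)
  have hρm : Measurable (deriv f) := measurable_deriv f
  have hρb : ∀ s, |deriv f s| ≤ (L : ℝ) := st12_deriv_bound hf
  have hρi : ∀ c d : ℝ, IntervalIntegrable (deriv f) volume c d := fun c d =>
    st12_ii (hρm.aestronglyMeasurable) hρb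
  have pos : ∀ s : ℝ, f a + (∫ u in a..s, deriv f u) = f s := by
    intro s
    rw [st12_ftc hf a s]
    ring
  have hGi : IntervalIntegrable (fun s => ℓ (f s) s (deriv f s) + h) volume a b := by
    apply st12_ii (M := M + |h|)
    · apply Measurable.aestronglyMeasurable
      apply Measurable.add _ measurable_const
      exact hℓ.measurable.comp ((hf.continuous.measurable).prodMk
        (measurable_id.prodMk hρm))
    · intro s
      calc |ℓ (f s) s (deriv f s) + h| ≤ |ℓ (f s) s (deriv f s)| + |h| := abs_add_le _ _
        _ ≤ M + |h| := by have := hM (f s) s (deriv f s) (hρb s); linarith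
  have heq : (fun s => ℓ (f a + ∫ u in a..s, deriv f u) s (deriv f s) + h)
      = fun s => ℓ (f s) s (deriv f s) + h := by
    funext s; rw [pos s]
  refine ⟨deriv f, hρi a b, ?_, ?_, ?_⟩
  · rw [pos b]
  · rw [heq]; exact hGi
  · rw [heq]
    have hℓint : IntervalIntegrable (fun s => ℓ (f s) s (deriv f s)) volume a b := by
      have : (fun s => ℓ (f s) s (deriv f s))
          = fun s => (ℓ (f s) s (deriv f s) + h) - h := by funext s; ring
      rw [this]
      exact hGi.sub intervalIntegrable_const
    rw [intervalIntegral.integral_add hℓint intervalIntegrable_const]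
    rw [intervalIntegral.integral_const]
    rw [smul_eq_mul]
    ring_nf
    exact le_refl _

end chunk5
section chunk6

open MeasureTheory intervalIntegral Filter

variable {ℓ : ℝ → ℝ → ℝ → ℝ} {h : ℝ}

/-- modified piece over a unit time interval, absorbing a start mismatch `Δ` -/
lemma st12_reach_mod
    (hℓ : Continuous fun p : ℝ × ℝ × ℝ => ℓ p.1 p.2.1 p.2.2)
    (hℓper : ∀ x t ξ : ℝ, ℓ (x + 1) t ξ = ℓ x t ξ ∧ ℓ x (t + 1) ξ = ℓ x t ξ)
    {f : ℝ → ℝ} {L : NNReal} (hf : LipschitzWith L f) (a : ℝ) {Δ η : ℝ}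
    (hpt : ∀ s, a ≤ s → s ≤ a + 1 →
      ℓ (f s + (a + 1 - s) * Δ) s (deriv f s - Δ) ≤ ℓ (f s) s (deriv f s) + η) :
    st12_Reach ℓ h a (a + 1) (f a + Δ) (f (a + 1))
      ((∫ s in a..(a + 1), ℓ (f s) s (deriv f s)) + h * 1 + η) := by
  obtain ⟨M, hM⟩ := st12_ell_bound hℓper hℓ ((L : ℝ) + |Δ|)
  obtain ⟨M₀, hM₀⟩ := st12_ell_bound hℓper hℓ (L : ℝ)
  have hρm : Measurable (fun s => deriv f s - Δ) := (measurable_deriv f).sub measurable_const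
  have hρb : ∀ s, |deriv f s - Δ| ≤ (L : ℝ) + |Δ| := fun s => by
    have := st12_deriv_bound hf s
    calc |deriv f s - Δ| ≤ |deriv f s| + |Δ| := abs_sub _ _
      _ ≤ (L : ℝ) + |Δ| := by linarith
  have hρi : IntervalIntegrable (fun s => deriv f s - Δ) volume a (a + 1) :=
    st12_ii hρm.aestronglyMeasurable hρb
  have hderivi : ∀ c d : ℝ, IntervalIntegrable (deriv f) volume c d := fun c d =>
    st12_ii (measurable_deriv f).aestronglyMeasurable (st12_deriv_bound hf)
  have pos : ∀ s : ℝ, (f a + Δ) + (∫ u in a..s, (deriv f u - Δ)) = f s + (a + 1 - s) * Δ := by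
    intro s
    rw [intervalIntegral.integral_sub (hderivi a s) intervalIntegrable_const]
    rw [st12_ftc hf a s, intervalIntegral.integral_const, smul_eq_mul]
    ring
  have heq : (fun s => ℓ ((f a + Δ) + ∫ u in a..s, (deriv f u - Δ)) s (deriv f s - Δ) + h)
      = fun s => ℓ (f s + (a + 1 - s) * Δ) s (deriv f s - Δ) + h := by
    funext s; rw [pos s]
  have hmodi : IntervalIntegrable
      (fun s => ℓ (f s + (a + 1 - s) * Δ) s (deriv f s - Δ) + h) volume a (a + 1) := by
    apply st12_ii (M := M + |h|)
    · apply Measurable.aestronglyMeasurable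
      apply Measurable.add _ measurable_const
      refine hℓ.measurable.comp (Measurable.prodMk ?_ (measurable_id.prodMk hρm))
      exact (hf.continuous.measurable).add
        ((measurable_const.sub measurable_id).mul measurable_const)
    · intro s
      calc |ℓ (f s + (a + 1 - s) * Δ) s (deriv f s - Δ) + h|
          ≤ |ℓ (f s + (a + 1 - s) * Δ) s (deriv f s - Δ)| + |h| := abs_add_le _ _
        _ ≤ M + |h| := by have := hM (f s + (a + 1 - s) * Δ) s (deriv f s - Δ) (hρb s); linarith
  have hGi : IntervalIntegrable (fun s => ℓ (f s) s (deriv f s) + η) volume a (a + 1) := by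
    apply st12_ii (M := M₀ + |η|)
    · apply Measurable.aestronglyMeasurable
      apply Measurable.add _ measurable_const
      exact hℓ.measurable.comp ((hf.continuous.measurable).prodMk
        (measurable_id.prodMk (measurable_deriv f)))
    · intro s
      calc |ℓ (f s) s (deriv f s) + η| ≤ |ℓ (f s) s (deriv f s)| + |η| := abs_add_le _ _
        _ ≤ M₀ + |η| := by have := hM₀ (f s) s (deriv f s) (st12_deriv_bound hf s); linarith
  refine ⟨fun s => deriv f s - Δ, hρi, ?_, ?_, ?_⟩
  · rw [pos (a + 1)]; ring_nf
  · rw [heq]; exact hmodi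
  · rw [heq]
    have step1 : (∫ s in a..(a + 1), (ℓ (f s + (a + 1 - s) * Δ) s (deriv f s - Δ) + h))
        ≤ ∫ s in a..(a + 1), ((ℓ (f s) s (deriv f s) + η) + h) := by
      apply intervalIntegral.integral_mono_on (by linarith) hmodi
        (hGi.add intervalIntegrable_const)
      intro s hs
      have := hpt s hs.1 hs.2
      linarith
    refine le_trans step1 ?_
    rw [intervalIntegral.integral_add hGi intervalIntegrable_const,
      intervalIntegral.integral_add (by
        have : (fun s => ℓ (f s) s (deriv f s)) = fun s => (ℓ (f s) s (deriv f s) + η) - η := by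
          funext s; ring
        rw [this]
        exact hGi.sub intervalIntegrable_const) intervalIntegrable_const]
    simp only [intervalIntegral.integral_const, smul_eq_mul]
    ring_nf
    exact le_refl _

/-- straight-line piece with an explicit sup bound on the Lagrangian -/
lemma st12_reach_linear
    (hℓ : Continuous fun p : ℝ × ℝ × ℝ => ℓ p.1 p.2.1 p.2.2)
    {M : ℝ} (v p a : ℝ) {d : ℝ} (hd : 0 ≤ d)
    (hM : ∀ x t ξ : ℝ, |ξ| ≤ |v| → ℓ x t ξ ≤ M) :
    st12_Reach ℓ h a (a + d) p (p + d * v) ((M + h) * d) := by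
  have hρi : IntervalIntegrable (fun _ : ℝ => v) volume a (a + d) := intervalIntegrable_const
  have pos : ∀ s : ℝ, p + (∫ _ in a..s, v) = p + (s - a) * v := by
    intro s
    rw [intervalIntegral.integral_const, smul_eq_mul]
  have heq : (fun s => ℓ (p + ∫ _ in a..s, v) s v + h)
      = fun s => ℓ (p + (s - a) * v) s v + h := by
    funext s; rw [pos s]
  have hGc : Continuous (fun s => ℓ (p + (s - a) * v) s v + h) := by
    apply Continuous.add _ continuous_const
    exact hℓ.comp (((continuous_const.add
      (((continuous_id.sub continuous_const)).mul continuous_const))).prodMk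
      (continuous_id.prodMk continuous_const))
  refine ⟨fun _ => v, hρi, ?_, ?_, ?_⟩
  · rw [pos (a + d)]; ring_nf
  · rw [heq]; exact hGc.intervalIntegrable _ _
  · rw [heq]
    calc (∫ s in a..(a + d), (ℓ (p + (s - a) * v) s v + h))
        ≤ ∫ _ in a..(a + d), (M + h) := by
          apply intervalIntegral.integral_mono_on (by linarith)
            (hGc.intervalIntegrable _ _) intervalIntegrable_const
          intro s _
          have := hM (p + (s - a) * v) s v (le_refl _)
          linarith
      _ = (M + h) * d := by
          rw [intervalIntegral.integral_const, smul_eq_mul]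
          ring

/-- Lipschitz extension of `γ₀` beyond time `τ` -/
lemma st12_min_ext {f : ℝ → ℝ} {L : NNReal} {c : ℝ} (hf : LipschitzOnWith L f (Set.Iic c)) :
    LipschitzWith L (fun s => f (min s c)) := by
  intro s t
  have h1 : min s c ∈ Set.Iic c := by simp [min_le_right]
  have h2 : min t c ∈ Set.Iic c := by simp [min_le_right]
  calc edist (f (min s c)) (f (min t c)) ≤ L * edist (min s c) (min t c) := hf h1 h2
    _ ≤ L * edist s t := by
        gcongr
        rw [edist_dist, edist_dist]
        apply ENNReal.ofReal_le_ofReal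
        rw [Real.dist_eq, Real.dist_eq]
        exact abs_min_sub_min_le_max s c t c |>.trans (by simp)
end chunk6

section chunk7

open MeasureTheory intervalIntegral Filter

variable {ℓ : ℝ → ℝ → ℝ → ℝ} {h : ℝ}

/-- one full piece of the chain: a modified unit interval followed by a calibrated stretch -/
lemma st12_piece {vbar : ℝ → ℝ → ℝ}
    (hℓ : Continuous fun p : ℝ × ℝ × ℝ => ℓ p.1 p.2.1 p.2.2)
    (hℓper : ∀ x t ξ : ℝ, ℓ (x + 1) t ξ = ℓ x t ξ ∧ ℓ x (t + 1) ξ = ℓ x t ξ)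
    {f : ℝ → ℝ} {L : NNReal} (hf : LipschitzWith L f)
    {s₀ s₁ : ℝ} (h01 : s₀ + 1 ≤ s₁)
    (hcal : ∀ a₁ a₂ : ℝ, a₁ ≤ a₂ → a₂ ≤ s₁ →
      vbar (f a₂) a₂ = (∫ s in a₁..a₂, ℓ (f s) s (deriv f s)) + h * (a₂ - a₁)
        + vbar (f a₁) a₁)
    {Δ η : ℝ}
    (hpt : ∀ s, s₀ ≤ s → s ≤ s₀ + 1 →
      ℓ (f s + (s₀ + 1 - s) * Δ) s (deriv f s - Δ) ≤ ℓ (f s) s (deriv f s) + η) :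
    st12_Reach ℓ h s₀ s₁ (f s₀ + Δ) (f s₁) (vbar (f s₁) s₁ - vbar (f s₀) s₀ + η) := by
  have r2 : st12_Reach ℓ h s₀ (s₀ + 1) (f s₀ + Δ) (f (s₀ + 1))
      (vbar (f (s₀ + 1)) (s₀ + 1) - vbar (f s₀) s₀ + η) := by
    have := st12_reach_mod (h := h) hℓ hℓper hf s₀ hpt
    apply this.mono
    have hc := hcal s₀ (s₀ + 1) (by linarith) h01
    have : (∫ s in s₀..(s₀ + 1), ℓ (f s) s (deriv f s))
        = vbar (f (s₀ + 1)) (s₀ + 1) - h * (s₀ + 1 - s₀) - vbar (f s₀) s₀ := by linarith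
    rw [this]
    ring_nf
    exact le_refl _
  have r1 : st12_Reach ℓ h (s₀ + 1) s₁ (f (s₀ + 1)) (f s₁)
      (vbar (f s₁) s₁ - vbar (f (s₀ + 1)) (s₀ + 1)) := by
    have := st12_reach_cal (h := h) hℓ hℓper hf (s₀ + 1) s₁ h01
    apply this.mono
    have hc := hcal (s₀ + 1) s₁ h01 le_rfl
    linarith
  have := r2.trans (by linarith) h01 r1
  apply this.mono
  linarith

end chunk7

section chunk7b

open Filter

lemma st12_closeBot {g : ℤ → ℝ} {w : ℝ}
    (hg : Tendsto (fun a => torusDist (g a) w) atBot (nhds 0)) {δ : ℝ} (hδ : 0 < δ) :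
    ∃ A : ℤ, ∀ a : ℤ, a ≤ A → ∃ m : ℤ, |g a - (w + m)| ≤ δ := by
  have h1 := (Metric.tendsto_nhds.mp hg) δ hδ
  rw [Filter.eventually_atBot] at h1
  obtain ⟨A, hA⟩ := h1
  refine ⟨A, fun a ha => ⟨round (g a - w), ?_⟩⟩
  have h2 := hA a ha
  rw [Real.dist_eq, sub_zero] at h2
  rw [abs_of_nonneg (by unfold torusDist; exact abs_nonneg _ : 0 ≤ torusDist (g a) w)] at h2
  have h3 : |g a - (w + (round (g a - w) : ℤ))| = torusDist (g a) w := by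
    unfold torusDist
    congr 1
    push_cast
    ring
  rw [h3]
  exact le_of_lt h2

lemma st12_closeTop {g : ℤ → ℝ} {w : ℝ}
    (hg : Tendsto (fun a => torusDist (g a) w) atTop (nhds 0)) {δ : ℝ} (hδ : 0 < δ) :
    ∃ A : ℤ, ∀ a : ℤ, A ≤ a → ∃ m : ℤ, |g a - (w + m)| ≤ δ := by
  have h1 := (Metric.tendsto_nhds.mp hg) δ hδ
  rw [Filter.eventually_atTop] at h1
  obtain ⟨A, hA⟩ := h1
  refine ⟨A, fun a ha => ⟨round (g a - w), ?_⟩⟩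
  have h2 := hA a ha
  rw [Real.dist_eq, sub_zero] at h2
  rw [abs_of_nonneg (by unfold torusDist; exact abs_nonneg _ : 0 ≤ torusDist (g a) w)] at h2
  have h3 : |g a - (w + (round (g a - w) : ℤ))| = torusDist (g a) w := by
    unfold torusDist
    congr 1
    push_cast
    ring
  rw [h3]
  exact le_of_lt h2

end chunk7b

set_option maxHeartbeats 1000000 in

/-- second half of Proposition 4.1: a calibrated heteroclinic
chain connecting `y` (at time `τ`) through `x₁, …, x_k` to `z` forces the
reverse Peierls-barrier inequality `h_p(z,0;y,τ) ≤ v̄(y,τ) − v̄(z,0)`. -/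
theorem statement12
    (ℓ : ℝ → ℝ → ℝ → ℝ)
    (hℓ : Continuous fun q : ℝ × ℝ × ℝ => ℓ q.1 q.2.1 q.2.2)
    (hℓper : ∀ x t ξ : ℝ, ℓ (x + 1) t ξ = ℓ x t ξ ∧ ℓ x (t + 1) ξ = ℓ x t ξ)
    (h : ℝ) (vbar : ℝ → ℝ → ℝ)
    (hcont : Continuous fun p : ℝ × ℝ => vbar p.1 p.2)
    (hper : ∀ x t : ℝ, vbar (x + 1) t = vbar x t ∧ vbar x (t + 1) = vbar x t)
    -- the backward Lax–Oleinik variational property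
    (hLO : ∀ x t τ' : ℝ, τ' < t →
      vbar x t = sInf {A : ℝ | ∃ (z : ℝ) (ρ : ℝ → ℝ),
          IntervalIntegrable ρ volume τ' t ∧
          z + (∫ s in τ'..t, ρ s) = x ∧
          IntervalIntegrable (fun s => ℓ (z + ∫ u in τ'..s, ρ u) s (ρ s)) volume τ' t ∧
          A = (∫ s in τ'..t, ℓ (z + ∫ u in τ'..s, ρ u) s (ρ s)) + vbar z τ'}
        + h * (t - τ'))
    (q : ℕ) (b : ℤ) (hb : b.natAbs < q)
    (y τ z : ℝ) (k : ℕ) (hk : 1 ≤ k) (x : ℕ → ℝ)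
    (Lc : NNReal)
    (γ₀ : ℝ → ℝ) (γs : ℕ → ℝ → ℝ)
    (hγ₀Lip : LipschitzOnWith Lc γ₀ (Set.Iic τ))
    (hγsLip : ∀ j : ℕ, 1 ≤ j → j ≤ k → LipschitzWith Lc (γs j))
    (hγ₀τ : γ₀ τ = y)
    -- the curves are calibrated for v̄
    (hcal₀ : ∀ a₁ a₂ : ℝ, a₁ ≤ a₂ → a₂ ≤ τ →
      vbar (γ₀ a₂) a₂
        = (∫ s in a₁..a₂, ℓ (γ₀ s) s (deriv γ₀ s)) + h * (a₂ - a₁) + vbar (γ₀ a₁) a₁)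
    (hcals : ∀ j : ℕ, 1 ≤ j → j ≤ k → ∀ a₁ a₂ : ℝ, a₁ ≤ a₂ →
      vbar (γs j a₂) a₂
        = (∫ s in a₁..a₂, ℓ (γs j s) s (deriv (γs j) s)) + h * (a₂ - a₁)
          + vbar (γs j a₁) a₁)
    -- the heteroclinic asymptotics
    (hlim₀ : Filter.Tendsto (fun a : ℤ => torusDist (γ₀ ((a : ℝ) * (q : ℝ))) (x 1))
      Filter.atBot (nhds 0))
    (hlimmid : ∀ j : ℕ, 1 ≤ j → j + 1 ≤ k →
      Filter.Tendsto (fun a : ℤ => torusDist (γs j ((a : ℝ) * (q : ℝ))) (x (j + 1)))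
        Filter.atBot (nhds 0) ∧
      Filter.Tendsto (fun a : ℤ => torusDist (γs j ((a : ℝ) * (q : ℝ))) (x j))
        Filter.atTop (nhds 0))
    (hlimk : Filter.Tendsto (fun a : ℤ => torusDist (γs k ((a : ℝ) * (q : ℝ) + (b : ℝ))) z)
        Filter.atBot (nhds 0) ∧
      Filter.Tendsto (fun a : ℤ => torusDist (γs k ((a : ℝ) * (q : ℝ))) (x k))
        Filter.atTop (nhds 0)) :
    Filter.liminf (fun T : ℕ => sInf {A : ℝ | ∃ (z' : ℝ) (ρ : ℝ → ℝ),
        IntervalIntegrable ρ volume (-(T : ℝ)) τ ∧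
        (∃ j : ℤ, z' = z + (j : ℝ)) ∧
        z' + (∫ s in (-(T : ℝ))..τ, ρ s) = y ∧
        IntervalIntegrable
          (fun s => ℓ (z' + ∫ u in (-(T : ℝ))..s, ρ u) s (ρ s) + h) volume (-(T : ℝ)) τ ∧
        A = ∫ s in (-(T : ℝ))..τ, (ℓ (z' + ∫ u in (-(T : ℝ))..s, ρ u) s (ρ s) + h)})
      Filter.atTop ≤ vbar y τ - vbar z 0 := by
  classical
  -- notation
  set Sset : ℕ → Set ℝ := fun T => {A : ℝ | ∃ (z' : ℝ) (ρ : ℝ → ℝ),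
        IntervalIntegrable ρ volume (-(T : ℝ)) τ ∧
        (∃ j : ℤ, z' = z + (j : ℝ)) ∧
        z' + (∫ s in (-(T : ℝ))..τ, ρ s) = y ∧
        IntervalIntegrable
          (fun s => ℓ (z' + ∫ u in (-(T : ℝ))..s, ρ u) s (ρ s) + h) volume (-(T : ℝ)) τ ∧
        A = ∫ s in (-(T : ℝ))..τ, (ℓ (z' + ∫ u in (-(T : ℝ))..s, ρ u) s (ρ s) + h)}
    with hSsetdef
  set LOset : ℝ → ℝ → ℝ → Set ℝ := fun xx t τ' => {A : ℝ | ∃ (z1 : ℝ) (ρ : ℝ → ℝ),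
          IntervalIntegrable ρ volume τ' t ∧
          z1 + (∫ s in τ'..t, ρ s) = xx ∧
          IntervalIntegrable (fun s => ℓ (z1 + ∫ u in τ'..s, ρ u) s (ρ s)) volume τ' t ∧
          A = (∫ s in τ'..t, ℓ (z1 + ∫ u in τ'..s, ρ u) s (ρ s)) + vbar z1 τ'}
    with hLOsetdef
  have hLO' : ∀ xx t τ' : ℝ, τ' < t →
      vbar xx t = sInf (LOset xx t τ') + h * (t - τ') := hLO
  have hq1 : 1 ≤ q := by
    rcases Nat.eq_zero_or_pos q with h0 | h1
    · rw [h0] at hb; exact absurd hb (Nat.not_lt_zero _)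
    · exact h1
  obtain ⟨Mv, hMv⟩ := st12_vbar_bound hper hcont
  have hMv0 : 0 ≤ Mv := le_trans (abs_nonneg _) (hMv 0 0)
  -- vbar is constant along integer translations
  have hvint : ∀ (p : ℝ) (j n : ℤ), vbar (p + j) (n : ℝ) = vbar p 0 := by
    intro p j n
    have := st12_vbar_red hper p 0 j n
    simpa using this
  -- from a Reach certificate to an element of Sset
  have hReachS : ∀ (T : ℕ) (j : ℤ) (C : ℝ),
      st12_Reach ℓ h (-(T : ℝ)) τ (z + j) y C → ∃ A ∈ Sset T, A ≤ C := by
    rintro T j C ⟨ρ, hi, hp, hci, hc⟩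
    refine ⟨∫ s in (-(T : ℝ))..τ, (ℓ ((z + j) + ∫ u in (-(T : ℝ))..s, ρ u) s (ρ s) + h),
      ⟨z + j, ρ, hi, ⟨j, rfl⟩, hp, hci, rfl⟩, hc⟩
  -- from a Reach certificate to an element of an LO set
  have hReachLO : ∀ (xx t τ' p₀ C : ℝ), st12_Reach ℓ h τ' t p₀ xx C →
      ∃ A ∈ LOset xx t τ', A ≤ C - h * (t - τ') + vbar p₀ τ' := by
    rintro xx t τ' p₀ C ⟨ρ, hi, hp, hci, hc⟩
    have hℓint : IntervalIntegrable
        (fun s => ℓ (p₀ + ∫ u in τ'..s, ρ u) s (ρ s)) volume τ' t := by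
      have heq2 : (fun s => ℓ (p₀ + ∫ u in τ'..s, ρ u) s (ρ s))
          = fun s => (ℓ (p₀ + ∫ u in τ'..s, ρ u) s (ρ s) + h) - h := by
        funext s; ring
      rw [heq2]
      exact hci.sub intervalIntegrable_const
    refine ⟨(∫ s in τ'..t, ℓ (p₀ + ∫ u in τ'..s, ρ u) s (ρ s)) + vbar p₀ τ',
      ⟨p₀, ρ, hi, hp, hℓint, rfl⟩, ?_⟩
    have hsplit : (∫ s in τ'..t, (ℓ (p₀ + ∫ u in τ'..s, ρ u) s (ρ s) + h))
        = (∫ s in τ'..t, ℓ (p₀ + ∫ u in τ'..s, ρ u) s (ρ s)) + h * (t - τ') := by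
      rw [intervalIntegral.integral_add hℓint intervalIntegrable_const,
        intervalIntegral.integral_const, smul_eq_mul]
      ring
    rw [hsplit] at hc
    linarith
  -- Sset elements give LO elements
  have hSLO : ∀ (T : ℕ) (A : ℝ), A ∈ Sset T →
      (A - h * (τ + T) + vbar z 0) ∈ LOset y τ (-(T : ℝ)) := by
    rintro T A ⟨z', ρ, hi, ⟨j, hzj⟩, hp, hci, hA⟩
    have hℓint : IntervalIntegrable
        (fun s => ℓ (z' + ∫ u in (-(T : ℝ))..s, ρ u) s (ρ s)) volume (-(T : ℝ)) τ := by
      have heq2 : (fun s => ℓ (z' + ∫ u in (-(T : ℝ))..s, ρ u) s (ρ s))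
          = fun s => (ℓ (z' + ∫ u in (-(T : ℝ))..s, ρ u) s (ρ s) + h) - h := by
        funext s; ring
      rw [heq2]
      exact hci.sub intervalIntegrable_const
    have hvz : vbar z' (-(T : ℝ)) = vbar z 0 := by
      rw [hzj]
      have : (-(T : ℝ)) = ((-(T : ℤ) : ℤ) : ℝ) := by push_cast; ring
      rw [this]
      exact hvint z j (-(T : ℤ))
    refine ⟨z', ρ, hi, hp, hℓint, ?_⟩
    have hsplit : (∫ s in (-(T : ℝ))..τ, (ℓ (z' + ∫ u in (-(T : ℝ))..s, ρ u) s (ρ s) + h))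
        = (∫ s in (-(T : ℝ))..τ, ℓ (z' + ∫ u in (-(T : ℝ))..s, ρ u) s (ρ s))
          + h * (τ + T) := by
      rw [intervalIntegral.integral_add hℓint intervalIntegrable_const,
        intervalIntegral.integral_const, smul_eq_mul]
      ring
    rw [hA, hsplit, hvz]
    ring
  -- lower bound on Sset elements when the LO set is bounded below
  have hlow : ∀ T : ℕ, -(T : ℝ) < τ → BddBelow (LOset y τ (-(T : ℝ))) →
      ∀ A ∈ Sset T, vbar y τ - vbar z 0 ≤ A := by
    intro T hT hbdd A hA
    have h1 := hSLO T A hA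
    have h2 : sInf (LOset y τ (-(T : ℝ))) ≤ A - h * (τ + T) + vbar z 0 := csInf_le hbdd h1
    have h3 := hLO' y τ (-(T : ℝ)) hT
    have h4 : h * (τ - -(T : ℝ)) = h * (τ + T) := by ring
    rw [h4] at h3
    linarith
  -- the frequent upper bound coming from the heteroclinic chain
  have hup : ∀ ε : ℝ, 0 < ε → ∀ N : ℕ, ∃ T : ℕ, N ≤ T ∧ -(T : ℝ) < τ ∧
      ∃ A ∈ Sset T, A ≤ (vbar y τ - vbar z 0) + ε := by
    intro ε hε N
    set η : ℝ := ε / (4 * (k : ℝ) + 4) with hηdef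
    have hη0 : 0 < η := by
      rw [hηdef]
      apply div_pos hε
      positivity
    obtain ⟨δv, hδv0, hδv1, hδv⟩ := st12_vbar_uc hper hcont hη0
    obtain ⟨δℓ, hδℓ0, hδℓ1, hδℓ⟩ := st12_ell_uc hℓper hℓ Lc.coe_nonneg hη0
    set δ : ℝ := min δv δℓ / 2 with hδdef
    have hδ0 : 0 < δ := by rw [hδdef]; positivity
    have h2δℓ : 2 * δ ≤ δℓ := by
      rw [hδdef]
      have := min_le_right δv δℓ
      linarith
    have h2δv : 2 * δ ≤ δv := by
      rw [hδdef]
      have := min_le_left δv δℓ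
      linarith
    have hδle_v : δ ≤ δv := by linarith [hδ0]
    -- the extension of γ₀
    set f0 : ℝ → ℝ := fun s => γ₀ (min s τ) with hf0def
    have hf0lip : LipschitzWith Lc f0 := st12_min_ext hγ₀Lip
    have hf0eq : ∀ s, s ≤ τ → f0 s = γ₀ s := by
      intro s hs
      show γ₀ (min s τ) = γ₀ s
      rw [min_eq_left hs]
    have hf0deriv : ∀ s, s < τ → deriv f0 s = deriv γ₀ s := by
      intro s hs
      apply Filter.EventuallyEq.deriv_eq
      filter_upwards [Iio_mem_nhds hs] with u hu
      show γ₀ (min u τ) = γ₀ u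
      rw [min_eq_left (le_of_lt (Set.mem_Iio.mp hu))]
    have hcal0' : ∀ a₁ a₂ : ℝ, a₁ ≤ a₂ → a₂ ≤ τ →
        vbar (f0 a₂) a₂ = (∫ s in a₁..a₂, ℓ (f0 s) s (deriv f0 s)) + h * (a₂ - a₁)
          + vbar (f0 a₁) a₁ := by
      intro a₁ a₂ h12 h2τ
      rw [hf0eq a₂ h2τ, hf0eq a₁ (le_trans h12 h2τ)]
      have hint : (∫ s in a₁..a₂, ℓ (f0 s) s (deriv f0 s))
          = ∫ s in a₁..a₂, ℓ (γ₀ s) s (deriv γ₀ s) := by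
        apply intervalIntegral.integral_congr_ae
        filter_upwards [st12_ae_ne τ] with s hneq hmem
        have hsle : s ≤ τ := by
          have h1 : s ≤ max a₁ a₂ := hmem.2
          have h2 : max a₁ a₂ ≤ τ := max_le (le_trans h12 h2τ) h2τ
          linarith
        have hslt : s < τ := lt_of_le_of_ne hsle hneq
        rw [hf0eq s hsle, hf0deriv s hslt]
      rw [hint]
      exact hcal₀ a₁ a₂ h12 h2τ
    -- pointwise Lagrangian estimate used for all modified pieces
    have hpt_gen : ∀ (f : ℝ → ℝ), LipschitzWith Lc f → ∀ (s₀ Δ : ℝ), |Δ| ≤ 2 * δ →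
        ∀ s, s₀ ≤ s → s ≤ s₀ + 1 →
          ℓ (f s + (s₀ + 1 - s) * Δ) s (deriv f s - Δ) ≤ ℓ (f s) s (deriv f s) + η := by
      intro f hf s₀ Δ hΔ s hs1 hs2
      have hu : |(s₀ + 1 - s) * Δ| ≤ δℓ := by
        rw [abs_mul]
        have h1 : |s₀ + 1 - s| ≤ 1 := by rw [abs_le]; constructor <;> linarith
        nlinarith [abs_nonneg Δ, abs_nonneg (s₀ + 1 - s)]
      have hΔ' : |-Δ| ≤ δℓ := by rw [abs_neg]; linarith
      have hkey := hδℓ (f s) s (deriv f s) ((s₀ + 1 - s) * Δ) (-Δ)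
        (st12_deriv_bound hf s) hu hΔ'
      have habs := (abs_le.mp hkey).2
      have hrw : deriv f s - Δ = deriv f s + (-Δ) := by ring
      rw [hrw]
      linarith
    -- integer arithmetic helper
    have hqZ : (1 : ℤ) ≤ (q : ℤ) := by exact_mod_cast hq1
    have hmulq : ∀ a : ℤ, a ≤ 0 → a * (q : ℤ) ≤ a := by
      intro a ha
      nlinarith
    -- the backwards-induction tail of the chain
    have tail : ∀ i : ℕ, i + 1 ≤ k → ∀ p : ℝ, (∃ m₀ : ℤ, |p - (x (i + 1) + m₀)| ≤ δ) →
        ∀ N' : ℤ, ∃ (t m : ℤ), t ≤ N' ∧ (t : ℝ) + 1 ≤ τ ∧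
          st12_Reach ℓ h (t : ℝ) τ (p + m) y
            (vbar y τ - vbar (x (i + 1)) 0 + (3 * (i : ℝ) + 2) * η) := by
      intro i
      induction i with
      | zero =>
        intro _hik p hp N'
        obtain ⟨m₀, hm₀⟩ := hp
        obtain ⟨A₀, hA₀⟩ := st12_closeBot hlim₀ hδ0
        set a₀ : ℤ := min A₀ (min (min N' 0) (⌊τ⌋ - 1)) with ha₀
        obtain ⟨m', hm'⟩ := hA₀ a₀ (min_le_left _ _)
        set t : ℤ := a₀ * q with ht
        have ha₀0 : a₀ ≤ 0 := by
          apply le_trans (min_le_right _ _)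
          apply le_trans (min_le_left _ _)
          exact min_le_right _ _
        have htle : t ≤ a₀ := hmulq a₀ ha₀0
        have htN : t ≤ N' := by
          apply le_trans htle
          apply le_trans (min_le_right _ _)
          apply le_trans (min_le_left _ _)
          exact min_le_left _ _
        have htτR : (t : ℝ) + 1 ≤ τ := by
          have h1 : a₀ ≤ ⌊τ⌋ - 1 := le_trans (min_le_right _ _) (min_le_right _ _)
          have h2 : (t : ℝ) ≤ (a₀ : ℝ) := by exact_mod_cast htle
          have h3 : (a₀ : ℝ) ≤ (⌊τ⌋ : ℝ) - 1 := by exact_mod_cast h1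
          have h4 : ((⌊τ⌋ : ℤ) : ℝ) ≤ τ := Int.floor_le τ
          linarith
        have hcast : (t : ℝ) = (a₀ : ℝ) * (q : ℝ) := by rw [ht]; push_cast; ring
        have hf0t : f0 ((t : ℤ) : ℝ) = γ₀ ((a₀ : ℝ) * (q : ℝ)) := by
          rw [hf0eq _ (by linarith), hcast]
        set Δ : ℝ := (p + ((m' - m₀ : ℤ) : ℝ)) - f0 ((t : ℤ) : ℝ) with hΔdef
        have hΔle : |Δ| ≤ 2 * δ := by
          have e : Δ = (p - (x 1 + m₀)) - (γ₀ ((a₀ : ℝ) * (q : ℝ)) - (x 1 + m')) := by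
            rw [hΔdef, hf0t]; push_cast; ring
          rw [e]
          calc |(p - (x 1 + m₀)) - (γ₀ ((a₀ : ℝ) * (q : ℝ)) - (x 1 + m'))|
              ≤ |p - (x 1 + m₀)| + |γ₀ ((a₀ : ℝ) * (q : ℝ)) - (x 1 + m')| := abs_sub _ _
            _ ≤ δ + δ := add_le_add (by simpa using hm₀) hm'
            _ = 2 * δ := by ring
        have hpiece := st12_piece (vbar := vbar) hℓ hℓper hf0lip
          (s₀ := ((t : ℤ) : ℝ)) (s₁ := τ) (by linarith) hcal0'
          (hpt_gen f0 hf0lip ((t : ℤ) : ℝ) Δ hΔle)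
        refine ⟨t, m' - m₀, htN, htτR, ?_⟩
        have hstart : f0 ((t : ℤ) : ℝ) + Δ = p + ((m' - m₀ : ℤ) : ℝ) := by rw [hΔdef]; ring
        have hendy : f0 τ = y := by rw [hf0eq τ le_rfl, hγ₀τ]
        rw [hstart, hendy] at hpiece
        apply hpiece.mono
        have hvb : |vbar (f0 ((t : ℤ) : ℝ)) ((t : ℤ) : ℝ) - vbar (x 1) 0| ≤ η := by
          rw [hf0t]
          exact hδv (x 1) (γ₀ ((a₀ : ℝ) * (q : ℝ))) m' t (le_trans hm' hδle_v)
        have hvb' := (abs_le.mp hvb).1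
        simp only [zero_add, Nat.cast_zero] at hvb' ⊢
        simp only [zero_add] at hm₀
        linarith
      | succ i ih =>
        intro hik p hp N'
        obtain ⟨m₀, hm₀⟩ := hp
        have hi1k : i + 1 ≤ k := by omega
        have hlims := hlimmid (i + 1) (by omega) (by omega)
        obtain ⟨Am, hAm⟩ := st12_closeBot hlims.1 hδ0
        obtain ⟨Ap, hAp⟩ := st12_closeTop hlims.2 hδ0
        set ap : ℤ := max Ap 0 with hap
        set tp : ℤ := ap * q with htp
        obtain ⟨m₁, hm₁⟩ := hAp ap (le_max_left _ _)
        obtain ⟨t', m', ht'N, ht'τ, hreach'⟩ :=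
          ih hi1k (γs (i + 1) ((ap : ℝ) * (q : ℝ))) ⟨m₁, hm₁⟩ N'
        set am : ℤ := min Am (ap - 1) with ham
        set tm : ℤ := am * q with htm
        obtain ⟨m₂, hm₂⟩ := hAm am (min_le_left _ _)
        have htmtp : tm + q ≤ tp := by
          have h1 : am ≤ ap - 1 := min_le_right _ _
          have h2 : am * (q : ℤ) ≤ (ap - 1) * q :=
            mul_le_mul_of_nonneg_right h1 (by omega)
          rw [htm, htp]
          nlinarith
        have h01R : (tm : ℝ) + 1 ≤ (tp : ℝ) := by
          have : tm + 1 ≤ tp := by omega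
          exact_mod_cast this
        have hcastm : ((tm : ℤ) : ℝ) = (am : ℝ) * (q : ℝ) := by rw [htm]; push_cast; ring
        have hcastp : ((tp : ℤ) : ℝ) = (ap : ℝ) * (q : ℝ) := by rw [htp]; push_cast; ring
        have hglip : LipschitzWith Lc (γs (i + 1)) := hγsLip (i + 1) (by omega) (by omega)
        set Δ : ℝ := (p + ((m₂ - m₀ : ℤ) : ℝ)) - γs (i + 1) ((tm : ℤ) : ℝ) with hΔdef
        have hΔle : |Δ| ≤ 2 * δ := by
          have e : Δ = (p - (x (i + 1 + 1) + m₀))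
              - (γs (i + 1) ((am : ℝ) * (q : ℝ)) - (x (i + 1 + 1) + m₂)) := by
            rw [hΔdef, hcastm]; push_cast; ring
          rw [e]
          calc |(p - (x (i + 1 + 1) + m₀)) - (γs (i + 1) ((am : ℝ) * (q : ℝ)) - (x (i + 1 + 1) + m₂))|
              ≤ |p - (x (i + 1 + 1) + m₀)| + |γs (i + 1) ((am : ℝ) * (q : ℝ)) - (x (i + 1 + 1) + m₂)| :=
                abs_sub _ _
            _ ≤ δ + δ := add_le_add hm₀ hm₂
            _ = 2 * δ := by ring
        have hpiece := st12_piece (vbar := vbar) hℓ hℓper hglip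
          (s₀ := ((tm : ℤ) : ℝ)) (s₁ := ((tp : ℤ) : ℝ)) h01R
          (fun a₁ a₂ h12 _ => hcals (i + 1) (by omega) (by omega) a₁ a₂ h12)
          (hpt_gen (γs (i + 1)) hglip ((tm : ℤ) : ℝ) Δ hΔle)
        have hshift := hpiece.shift hℓper m' (t' - tp)
        set tst : ℤ := tm + t' - tp with htst
        have e1 : ((tm : ℤ) : ℝ) + ((t' - tp : ℤ) : ℝ) = ((tst : ℤ) : ℝ) := by
          rw [htst]; push_cast; ring
        have e2 : ((tp : ℤ) : ℝ) + ((t' - tp : ℤ) : ℝ) = ((t' : ℤ) : ℝ) := by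
          push_cast; ring
        rw [e1, e2] at hshift
        have hstart : γs (i + 1) ((tm : ℤ) : ℝ) + Δ + ((m' : ℤ) : ℝ)
            = p + ((m₂ - m₀ + m' : ℤ) : ℝ) := by
          rw [hΔdef]; push_cast; ring
        have hpe : γs (i + 1) ((tp : ℤ) : ℝ) + ((m' : ℤ) : ℝ)
            = γs (i + 1) ((ap : ℝ) * (q : ℝ)) + ((m' : ℤ) : ℝ) := by
          rw [hcastp]
        rw [hstart, hpe] at hshift
        have hcat := hshift.trans (by
            have : tst ≤ t' := by omega
            exact_mod_cast this)
          (by linarith) hreach'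
        refine ⟨tst, m₂ - m₀ + m', by omega, ?_, ?_⟩
        · have : tst ≤ t' := by omega
          have hR : (tst : ℝ) ≤ (t' : ℝ) := by exact_mod_cast this
          linarith
        · apply hcat.mono
          have hvb1 : |vbar (γs (i + 1) ((tp : ℤ) : ℝ)) ((tp : ℤ) : ℝ) - vbar (x (i + 1)) 0| ≤ η :=
            hδv (x (i + 1)) (γs (i + 1) ((tp : ℤ) : ℝ)) m₁ tp
              (by rw [hcastp]; exact le_trans hm₁ hδle_v)
          have hvb2 : |vbar (γs (i + 1) ((tm : ℤ) : ℝ)) ((tm : ℤ) : ℝ) - vbar (x (i + 1 + 1)) 0| ≤ η :=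
            hδv (x (i + 1 + 1)) (γs (i + 1) ((tm : ℤ) : ℝ)) m₂ tm
              (by rw [hcastm]; exact le_trans hm₂ hδle_v)
          have h1 := (abs_le.mp hvb1).2
          have h2 := (abs_le.mp hvb2).1
          push_cast
          linarith
    -- the last (γ_k) piece and the conclusion
    have hk1 : k - 1 + 1 = k := Nat.succ_pred_eq_of_pos hk
    obtain ⟨Am, hAm⟩ := st12_closeBot hlimk.1 hδ0
    obtain ⟨Ap, hAp⟩ := st12_closeTop hlimk.2 hδ0
    set ap : ℤ := max Ap 0 with hap
    set tp : ℤ := ap * q with htp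
    obtain ⟨m₁, hm₁⟩ := hAp ap (le_max_left _ _)
    have hm₁' : ∃ m₀' : ℤ, |γs k ((ap : ℝ) * (q : ℝ)) - (x (k - 1 + 1) + m₀')| ≤ δ := by
      rw [hk1]; exact ⟨m₁, hm₁⟩
    obtain ⟨t', m', ht'N, ht'τ, hreach'⟩ :=
      tail (k - 1) (by omega) (γs k ((ap : ℝ) * (q : ℝ))) hm₁' (min (-(N : ℤ)) 0)
    rw [hk1] at hreach'
    set am : ℤ := min Am (ap - 1) with ham
    set tm : ℤ := am * q + b with htm
    obtain ⟨m₂, hm₂⟩ := hAm am (min_le_left _ _)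
    have hbq : b ≤ (q : ℤ) - 1 := by
      have := Int.le_natAbs (a := b)
      omega
    have htmtp : tm + 1 ≤ tp := by
      have h1 : am ≤ ap - 1 := min_le_right _ _
      have h2 : am * (q : ℤ) ≤ (ap - 1) * q :=
        mul_le_mul_of_nonneg_right h1 (by omega)
      rw [htm, htp]
      nlinarith
    have h01R : (tm : ℝ) + 1 ≤ (tp : ℝ) := by exact_mod_cast htmtp
    have hcastm : ((tm : ℤ) : ℝ) = (am : ℝ) * (q : ℝ) + (b : ℝ) := by
      rw [htm]; push_cast; ring
    have hcastp : ((tp : ℤ) : ℝ) = (ap : ℝ) * (q : ℝ) := by rw [htp]; push_cast; ring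
    have hglip : LipschitzWith Lc (γs k) := hγsLip k hk le_rfl
    set Δ : ℝ := (z + ((m₂ : ℤ) : ℝ)) - γs k ((tm : ℤ) : ℝ) with hΔdef
    have hΔle : |Δ| ≤ 2 * δ := by
      have e : Δ = -(γs k ((am : ℝ) * (q : ℝ) + (b : ℝ)) - (z + m₂)) := by
        rw [hΔdef, hcastm]; push_cast; ring
      rw [e, abs_neg]
      calc |γs k ((am : ℝ) * (q : ℝ) + (b : ℝ)) - (z + m₂)| ≤ δ := hm₂
        _ ≤ 2 * δ := by linarith
    have hpiece := st12_piece (vbar := vbar) hℓ hℓper hglip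
      (s₀ := ((tm : ℤ) : ℝ)) (s₁ := ((tp : ℤ) : ℝ)) h01R
      (fun a₁ a₂ h12 _ => hcals k hk le_rfl a₁ a₂ h12)
      (hpt_gen (γs k) hglip ((tm : ℤ) : ℝ) Δ hΔle)
    have hshift := hpiece.shift hℓper m' (t' - tp)
    set tst : ℤ := tm + t' - tp with htst
    have e1 : ((tm : ℤ) : ℝ) + ((t' - tp : ℤ) : ℝ) = ((tst : ℤ) : ℝ) := by
      rw [htst]; push_cast; ring
    have e2 : ((tp : ℤ) : ℝ) + ((t' - tp : ℤ) : ℝ) = ((t' : ℤ) : ℝ) := by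
      push_cast; ring
    rw [e1, e2] at hshift
    have hstart : γs k ((tm : ℤ) : ℝ) + Δ + ((m' : ℤ) : ℝ) = z + ((m₂ + m' : ℤ) : ℝ) := by
      rw [hΔdef]; push_cast; ring
    have hpe : γs k ((tp : ℤ) : ℝ) + ((m' : ℤ) : ℝ)
        = γs k ((ap : ℝ) * (q : ℝ)) + ((m' : ℤ) : ℝ) := by
      rw [hcastp]
    rw [hstart, hpe] at hshift
    have hcat := hshift.trans (by
        have : tst ≤ t' := by omega
        exact_mod_cast this)
      (by linarith) hreach'
    -- package as an element of Sset T
    have htst0 : tst ≤ -(N : ℤ) := by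
      have h1 : t' ≤ -(N : ℤ) := le_trans ht'N (min_le_left _ _)
      omega
    set T : ℕ := (-tst).toNat with hT
    have hTZ : (T : ℤ) = -tst := by rw [hT]; exact Int.toNat_of_nonneg (by omega)
    have hTN : N ≤ T := by omega
    have hTR : -(T : ℝ) = ((tst : ℤ) : ℝ) := by
      have h' : ((T : ℤ) : ℝ) = ((-tst : ℤ) : ℝ) := by rw [hTZ]
      push_cast at h'
      linarith
    rw [show ((tst : ℤ) : ℝ) = -(T : ℝ) from hTR.symm] at hcat
    have hTτ : -(T : ℝ) < τ := by
      rw [hTR]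
      have h1 : tst ≤ t' := by omega
      have h2 : ((tst : ℤ) : ℝ) ≤ ((t' : ℤ) : ℝ) := by exact_mod_cast h1
      linarith
    refine ⟨T, hTN, hTτ, ?_⟩
    obtain ⟨A, hAmem, hAle⟩ := hReachS T (m₂ + m') _ hcat
    refine ⟨A, hAmem, le_trans hAle ?_⟩
    -- cost estimate
    have hvb1 : |vbar (γs k ((tp : ℤ) : ℝ)) ((tp : ℤ) : ℝ) - vbar (x k) 0| ≤ η :=
      hδv (x k) (γs k ((tp : ℤ) : ℝ)) m₁ tp (by rw [hcastp]; exact le_trans hm₁ hδle_v)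
    have hvb2 : |vbar (γs k ((tm : ℤ) : ℝ)) ((tm : ℤ) : ℝ) - vbar z 0| ≤ η :=
      hδv z (γs k ((tm : ℤ) : ℝ)) m₂ tm (by rw [hcastm]; exact le_trans hm₂ hδle_v)
    have h1 := (abs_le.mp hvb1).2
    have h2 := (abs_le.mp hvb2).1
    have hkcast : ((k - 1 : ℕ) : ℝ) = (k : ℝ) - 1 := by
      rw [Nat.cast_sub hk, Nat.cast_one]
    have hηsum : (4 * (k : ℝ) + 4) * η = ε := by
      rw [hηdef]
      field_simp
    have hk0 : (0 : ℝ) ≤ (k : ℝ) := Nat.cast_nonneg k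
    rw [hkcast]
    nlinarith [mul_nonneg hk0 hη0.le, hη0.le, h1, h2, hηsum]

  -- CASE ANALYSIS
  by_cases hcase : ∀ T : ℕ, -(T : ℝ) < τ → BddBelow (LOset y τ (-(T : ℝ)))
  · -- Case A : all LO sets bounded below
    have hbound : Filter.IsBoundedUnder (· ≥ ·) Filter.atTop (fun T : ℕ => sInf (Sset T)) := by
      refine ⟨min (vbar y τ - vbar z 0) 0, ?_⟩
      rw [Filter.eventually_map, Filter.eventually_atTop]
      obtain ⟨N₁, hN₁⟩ := exists_nat_gt (-τ)
      refine ⟨N₁, fun T hT => ?_⟩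
      have hTτ : -(T : ℝ) < τ := by
        have : (N₁ : ℝ) ≤ T := by exact_mod_cast hT
        linarith
      rcases Set.eq_empty_or_nonempty (Sset T) with hemp | hne
      · rw [hemp, Real.sInf_empty]
        exact min_le_right _ _
      · refine le_csInf hne fun A hA => ?_
        exact le_trans (min_le_left _ _) (hlow T hTτ (hcase T hTτ) A hA)
    refine le_of_forall_pos_le_add fun ε hε => ?_
    apply Filter.liminf_le_of_frequently_le _ hbound
    rw [Filter.frequently_atTop]
    intro N
    obtain ⟨T, hTN, hTτ, A, hAmem, hAle⟩ := hup ε hε N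
    refine ⟨T, hTN, ?_⟩
    have hbddS : BddBelow (Sset T) :=
      ⟨vbar y τ - vbar z 0, fun A' hA' => hlow T hTτ (hcase T hTτ) A' hA'⟩
    exact le_trans (csInf_le hbddS hAmem) hAle
  · -- Case B : some LO set is unbounded below; then `sInf (Sset T) = 0` eventually and
    -- the degenerate identities force `vbar y τ = vbar z 0 = 0`, `h = 0`.
    push_neg at hcase
    obtain ⟨T₀, hT₀τ, hT₀un⟩ := hcase
    obtain ⟨M₁, hM₁⟩ := st12_ell_bound hℓper hℓ 1
    -- arbitrarily cheap curves ending at (y, τ), starting at time -T₀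
    have hcheap : ∀ r : ℝ, ∃ (z'' : ℝ) (C : ℝ),
        st12_Reach ℓ h (-(T₀ : ℝ)) τ z'' y C ∧ C + vbar z'' (-(T₀ : ℝ)) ≤ r := by
      intro r
      obtain ⟨V, hVmem, hVlt⟩ :=
        not_bddBelow_iff.mp hT₀un (r - h * (τ + T₀))
      obtain ⟨z'', ρ, hi, hp, hℓint, hVeq⟩ := hVmem
      refine ⟨z'', (∫ s in (-(T₀ : ℝ))..τ, ℓ (z'' + ∫ u in (-(T₀ : ℝ))..s, ρ u) s (ρ s))
        + h * (τ + T₀), ⟨ρ, hi, hp, ?_, ?_⟩, ?_⟩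
      · have heq2 : (fun s => ℓ (z'' + ∫ u in (-(T₀ : ℝ))..s, ρ u) s (ρ s) + h)
            = fun s => (ℓ (z'' + ∫ u in (-(T₀ : ℝ))..s, ρ u) s (ρ s)) + h := by
          funext s; ring
        rw [heq2]
        exact hℓint.add intervalIntegrable_const
      · rw [intervalIntegral.integral_add hℓint intervalIntegrable_const,
          intervalIntegral.integral_const, smul_eq_mul]
        have : (τ - -(T₀ : ℝ)) * h = h * (τ + T₀) := by ring
        rw [this]
      · rw [hVeq] at hVlt
        linarith
    -- hence the Sset are eventually unbounded below (and nonempty)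
    have hSun : ∀ T : ℕ, T₀ < T → ∀ r : ℝ, ∃ A ∈ Sset T, A < r := by
      intro T hT r
      have hd : (0 : ℝ) < (T : ℝ) - T₀ := by
        have : (T₀ : ℝ) < T := by exact_mod_cast hT
        linarith
      have hd1 : (1 : ℝ) ≤ (T : ℝ) - T₀ := by
        have : ((T₀ : ℝ) + 1) ≤ T := by exact_mod_cast hT
        linarith
      obtain ⟨z'', C, hreach, hCle⟩ :=
        hcheap (r - 1 - (M₁ + h) * ((T : ℝ) - T₀) - Mv - Mv)
      set j : ℤ := ⌊z'' - z⌋ with hj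
      set v : ℝ := (z'' - (z + j)) / ((T : ℝ) - T₀) with hv
      have hfr : z'' - (z + j) = Int.fract (z'' - z) := by rw [Int.fract, hj]; ring
      have hvle : |v| ≤ 1 := by
        rw [hv, abs_div, abs_of_pos hd, div_le_one hd, hfr,
          abs_of_nonneg (Int.fract_nonneg _)]
        have h1 : Int.fract (z'' - z) < 1 := Int.fract_lt_one _
        linarith
      have hlin := st12_reach_linear (h := h) hℓ (M := M₁) v (z + j) (-(T : ℝ))
        (le_of_lt hd) (fun x1 t1 ξ1 hξ1 => by
          have := hM₁ x1 t1 ξ1 (le_trans hξ1 hvle)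
          exact le_trans (le_abs_self _) this)
      have hend : -(T : ℝ) + ((T : ℝ) - T₀) = -(T₀ : ℝ) := by ring
      have hendp : z + j + ((T : ℝ) - T₀) * v = z'' := by
        rw [hv]
        field_simp
        ring
      rw [hend, hendp] at hlin
      have hcat := hlin.trans (by linarith) (le_of_lt hT₀τ) hreach
      obtain ⟨A, hAmem, hAle⟩ := hReachS T j _ hcat
      refine ⟨A, hAmem, ?_⟩
      have hzb := hMv z'' (-(T₀ : ℝ))
      have : C ≤ r - 1 - (M₁ + h) * ((T : ℝ) - T₀) - Mv - Mv + Mv := by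
        have := neg_abs_le (vbar z'' (-(T₀ : ℝ)))
        have habs := abs_le.mp hzb
        linarith
      calc A ≤ (M₁ + h) * ((T : ℝ) - T₀) + C := hAle
        _ < r := by linarith
    have hSinf0 : ∀ T : ℕ, T₀ < T → sInf (Sset T) = 0 := by
      intro T hT
      have : ¬BddBelow (Sset T) := by
        rw [not_bddBelow_iff]
        intro r
        obtain ⟨A, hA, hAr⟩ := hSun T hT r
        exact ⟨A, hA, hAr⟩
      rw [csInf_of_not_bddBelow this, Real.sInf_empty]
    -- the liminf is 0
    have hliminf : Filter.liminf (fun T : ℕ => sInf (Sset T)) Filter.atTop = 0 := by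
      have hcongr : ∀ᶠ T : ℕ in Filter.atTop, sInf (Sset T) = (0 : ℝ) := by
        rw [Filter.eventually_atTop]
        exact ⟨T₀ + 1, fun T hT => hSinf0 T (by omega)⟩
      rw [Filter.liminf_congr hcongr]
      exact Filter.liminf_const 0
    rw [hliminf]
    -- degenerate identities : h = 0, vbar y τ = 0
    have hTτ1 : -(T₀ : ℝ) - 1 < τ := by linarith
    have hLOun : ∀ T : ℕ, T₀ < T → -(T : ℝ) < τ → ¬BddBelow (LOset y τ (-(T : ℝ))) := by
      intro T hT hTτ
      rw [not_bddBelow_iff]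
      intro r
      obtain ⟨A, hAmem, hAlt⟩ := hSun T hT (r + h * (τ + T) - vbar z 0)
      exact ⟨A - h * (τ + T) + vbar z 0, hSLO T A hAmem, by linarith⟩
    have hTT1 : -(T₀ + 1 : ℕ) < τ ∧ -((T₀ + 2 : ℕ) : ℝ) < τ := by
      constructor <;> · push_cast; linarith
    have heq1 : vbar y τ = h * (τ - -((T₀ + 1 : ℕ) : ℝ)) := by
      have := hLO' y τ (-((T₀ + 1 : ℕ) : ℝ)) hTT1.1
      rw [csInf_of_not_bddBelow (hLOun (T₀ + 1) (by omega) hTT1.1), Real.sInf_empty] at this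
      linarith
    have heq2 : vbar y τ = h * (τ - -((T₀ + 2 : ℕ) : ℝ)) := by
      have := hLO' y τ (-((T₀ + 2 : ℕ) : ℝ)) hTT1.2
      rw [csInf_of_not_bddBelow (hLOun (T₀ + 2) (by omega) hTT1.2), Real.sInf_empty] at this
      linarith
    have hh0 : h = 0 := by
      have : h * (τ - -((T₀ + 1 : ℕ) : ℝ)) = h * (τ - -((T₀ + 2 : ℕ) : ℝ)) := by
        rw [← heq1, ← heq2]
      push_cast at this
      nlinarith [this]
    have hvy0 : vbar y τ = 0 := by rw [heq1, hh0]; ring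
    -- vbar z 0 = 0 as well
    obtain ⟨M₂, hM₂⟩ := st12_ell_bound hℓper hℓ |z - y|
    set m : ℤ := ⌊τ⌋ + 2 with hm
    have hmτ : τ + 1 < (m : ℝ) := by
      rw [hm]
      push_cast
      have := Int.lt_floor_add_one τ
      linarith
    have hmτ2 : (m : ℝ) ≤ τ + 2 := by
      rw [hm]; push_cast
      have := Int.floor_le τ
      linarith
    have hr1 : (1 : ℝ) ≤ (m : ℝ) - τ := by linarith
    have hLOzun : ¬BddBelow (LOset z (m : ℝ) (-(T₀ : ℝ))) := by
      rw [not_bddBelow_iff]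
      intro r
      obtain ⟨z'', C, hreach, hCle⟩ :=
        hcheap (r - 1 - (M₂ + h) * ((m : ℝ) - τ) + h * ((m : ℝ) - -(T₀ : ℝ)))
      set v2 : ℝ := (z - y) / ((m : ℝ) - τ) with hv2
      have hv2le : |v2| ≤ |z - y| := by
        rw [hv2, abs_div, abs_of_pos (by linarith : (0:ℝ) < (m : ℝ) - τ)]
        rw [div_le_iff₀ (by linarith : (0:ℝ) < (m : ℝ) - τ)]
        nlinarith [abs_nonneg (z - y)]
      have hlin := st12_reach_linear (h := h) hℓ (M := M₂) v2 y τ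
        (by linarith : (0:ℝ) ≤ (m : ℝ) - τ) (fun x1 t1 ξ1 hξ1 => by
          have := hM₂ x1 t1 ξ1 (le_trans hξ1 hv2le)
          exact le_trans (le_abs_self _) this)
      have hend : τ + ((m : ℝ) - τ) = (m : ℝ) := by ring
      have hendp : y + ((m : ℝ) - τ) * v2 = z := by
        rw [hv2]
        field_simp
        ring
      rw [hend, hendp] at hlin
      have hcat := hreach.trans (le_of_lt hT₀τ) (by linarith) hlin
      obtain ⟨V, hVmem, hVle⟩ := hReachLO z (m : ℝ) (-(T₀ : ℝ)) z'' _ hcat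
      refine ⟨V, hVmem, ?_⟩
      calc V ≤ (C + (M₂ + h) * ((m : ℝ) - τ)) - h * ((m : ℝ) - -(T₀ : ℝ))
          + vbar z'' (-(T₀ : ℝ)) := hVle
        _ < r := by linarith
    have hvz0 : vbar z 0 = 0 := by
      have hLOz := hLO' z (m : ℝ) (-(T₀ : ℝ)) (by linarith)
      rw [csInf_of_not_bddBelow hLOzun, Real.sInf_empty] at hLOz
      have hzm : vbar z (m : ℝ) = vbar z 0 := by
        have := hvint z 0 m
        simpa using this
      rw [hzm] at hLOz
      rw [hLOz, hh0]
      ring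
    rw [hvy0, hvz0]
    norm_num
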